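/- Let n, B be positive integers, γ > 0, δ ≥ 0, and let λ1 ≥ λ2 ≥ … ≥ λ_d > 0. Define q(m, ρ) := 2nB(m + nδ)/γ − (Σ_{i=1}^d λ_i²)·m + (2 − ρ)m² and ϑ := 2 + 2nB(λ1² + nδ)/(γλ1⁴) − (Σ_{i=1}^d λ_i²)/λ1². If γ < γ̄ := 2nB(λ1² + nδ)/(λ1² Σ_{i=1}^d λ_i²), then q(λ_d², ϑ) ≥ (Σ_{i=1}^d λ_i²)·( (λ_d² + nδ)/(λ1² + nδ) · λ1² − λ_d² ) ≥ 0 = q(λ1², ϑ). -/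
import Mathlib


open Finset

/-- The auxiliary quadratic `q(m, ρ) = 2nB(m + nδ)/γ − T·m + (2 − ρ)m²`,
where `T = Σ_{i=1}^d λ_i²`. -/
noncomputable def qAux (n B : ℕ) (γ δ T m ρ : ℝ) : ℝ :=
  2 * n * B * (m + n * δ) / γ - T * m + (2 - ρ) * m ^ 2

theorem qAux_endpoint_inequalities (n B d : ℕ) (hn : 0 < n) (hB : 0 < B) (hd : 0 < d)
    (γ δ : ℝ) (hγ : 0 < γ) (hδ : 0 ≤ δ)
    (lam : Fin d → ℝ) (hpos : ∀ i, 0 < lam i)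
    (hdec : ∀ i j : Fin d, i ≤ j → lam j ≤ lam i)
    (hbar : γ < 2 * n * B * ((lam ⟨0, hd⟩) ^ 2 + n * δ) /
      ((lam ⟨0, hd⟩) ^ 2 * ∑ i, lam i ^ 2)) :
    (∑ i, lam i ^ 2) *
        (((lam ⟨d - 1, by omega⟩) ^ 2 + n * δ) / ((lam ⟨0, hd⟩) ^ 2 + n * δ) * (lam ⟨0, hd⟩) ^ 2 -
          (lam ⟨d - 1, by omega⟩) ^ 2) ≤
      qAux n B γ δ (∑ i, lam i ^ 2) ((lam ⟨d - 1, by omega⟩) ^ 2)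
        (2 + 2 * n * B * ((lam ⟨0, hd⟩) ^ 2 + n * δ) / (γ * (lam ⟨0, hd⟩) ^ 4) -
          (∑ i, lam i ^ 2) / (lam ⟨0, hd⟩) ^ 2) ∧
    0 ≤ (∑ i, lam i ^ 2) *
        (((lam ⟨d - 1, by omega⟩) ^ 2 + n * δ) / ((lam ⟨0, hd⟩) ^ 2 + n * δ) * (lam ⟨0, hd⟩) ^ 2 -
          (lam ⟨d - 1, by omega⟩) ^ 2) ∧
    qAux n B γ δ (∑ i, lam i ^ 2) ((lam ⟨0, hd⟩) ^ 2)
        (2 + 2 * n * B * ((lam ⟨0, hd⟩) ^ 2 + n * δ) / (γ * (lam ⟨0, hd⟩) ^ 4) -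
          (∑ i, lam i ^ 2) / (lam ⟨0, hd⟩) ^ 2) = 0 := by
  set a : ℝ := (lam ⟨0, hd⟩) ^ 2 with ha_def
  set b : ℝ := (lam ⟨d - 1, by omega⟩) ^ 2 with hb_def
  set T : ℝ := ∑ i, lam i ^ 2 with hT_def
  have ha : 0 < a := pow_pos (hpos _) 2
  have hb : 0 < b := pow_pos (hpos _) 2
  have hab : b ≤ a := by
    have h := hdec ⟨0, hd⟩ ⟨d - 1, by omega⟩ (by simp [Fin.le_def])
    have h0 := (hpos ⟨d - 1, by omega⟩).le
    nlinarith
  have hT : 0 < T := by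
    apply Finset.sum_pos (fun i _ => pow_pos (hpos i) 2)
    exact ⟨⟨0, hd⟩, Finset.mem_univ _⟩
  have hnδ : (0:ℝ) ≤ (n:ℝ) * δ := by positivity
  have hK : 0 < a + n * δ := by linarith
  have hnB : (0:ℝ) < 2 * n * B := by positivity
  have hkey : γ * (a * T) < 2 * n * B * (a + n * δ) := by
    have := (lt_div_iff₀ (by positivity : (0:ℝ) < a * T)).mp hbar
    linarith
  refine ⟨?_, ?_, ?_⟩
  · unfold qAux
    rw [show (lam ⟨0, hd⟩ : ℝ) ^ 4 = a ^ 2 by rw [ha_def]; ring]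
    have expand : 2 * (n:ℝ) * B * (b + n * δ) / γ - T * b +
        (2 - (2 + 2 * n * B * (a + n * δ) / (γ * a ^ 2) - T / a)) * b ^ 2 =
        T * ((b + n * δ) / (a + n * δ) * a - b) +
        ((a - b) * (a * b + n * δ * (a + b))) * (2 * n * B * (a + n * δ) - γ * (a * T)) /
          (γ * a ^ 2 * (a + n * δ)) := by
      field_simp
      ring
    rw [expand]
    have hnn : 0 ≤ ((a - b) * (a * b + n * δ * (a + b))) *
        (2 * n * B * (a + n * δ) - γ * (a * T)) / (γ * a ^ 2 * (a + n * δ)) := by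
      apply div_nonneg _ (by positivity)
      apply mul_nonneg (mul_nonneg (by linarith) (by nlinarith)) (by linarith)
    linarith
  · have h1 : (b + n * δ) / (a + n * δ) * a - b = n * δ * (a - b) / (a + n * δ) := by
      field_simp; ring
    rw [h1]
    exact mul_nonneg hT.le (div_nonneg (mul_nonneg hnδ (by linarith)) hK.le)
  · unfold qAux
    rw [show (lam ⟨0, hd⟩ : ℝ) ^ 4 = a ^ 2 by rw [ha_def]; ring]
    field_simp
    ring
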